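/- arXiv:2601.02499 — 3 statements merged into one kernel-verified Lean document; each statement's English description precedes it below -/
import Mathlib

section
/- Let (X, 𝒜, μ) be a probability space and let p : X → [0, ∞) be measurable with ∫ p dμ = 1 and p > 0 μ-almost everywhere. Let ν be the probability measure with density p with respect to μ. Then ∫ max(log(1/p(x)), 0)⁴ dν(x) ≤ 24. -/
open MeasureTheory
open scoped NNReal

lemma pow4_div24_le_exp (u : ℝ) (hu : 0 ≤ u) : u ^ 4 / 24 ≤ Real.exp u := by
  have h := Real.sum_le_exp_of_nonneg hu 5
  have h4 : u ^ 4 / (Nat.factorial 4 : ℝ) ≤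
      ∑ i ∈ Finset.range 5, u ^ i / (Nat.factorial i : ℝ) := by
    apply Finset.single_le_sum (f := fun i => u ^ i / (Nat.factorial i : ℝ))
    · intro i _
      positivity
    · simp
  calc u ^ 4 / 24 = u ^ 4 / (Nat.factorial 4 : ℝ) := by norm_num [Nat.factorial]
    _ ≤ _ := h4
    _ ≤ Real.exp u := h

lemma key_pointwise (t : ℝ) (ht : 0 ≤ t) :
    t * max (Real.log (1 / t)) 0 ^ 4 ≤ 24 := by
  rcases eq_or_lt_of_le ht with h0 | h0
  · simp [← h0]
  rcases le_or_gt (Real.log (1 / t)) 0 with hl | hl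
  · rw [max_eq_right hl]
    norm_num
  · rw [max_eq_left hl.le]
    set u := Real.log (1 / t) with hu
    have hlog : u = -Real.log t := by rw [hu, one_div, Real.log_inv]
    have ht' : t = Real.exp (-u) := by
      rw [hlog, neg_neg, Real.exp_log h0]
    have h1 : u ^ 4 / 24 ≤ Real.exp u := pow4_div24_le_exp u hl.le
    have h2 : Real.exp (-u) * u ^ 4 ≤ 24 := by
      rw [Real.exp_neg, inv_mul_le_iff₀ (Real.exp_pos u)]
      rw [div_le_iff₀ (by norm_num : (0:ℝ) < 24)] at h1
      linarith
    rw [ht']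
    exact h2

/-- Chebyshev/layer-cake estimate: if `p` is a probability density w.r.t. the probability
measure `μ` and `ν = p·μ`, then `∫ max(log(1/p), 0)⁴ dν ≤ 24`. -/
theorem fourth_log_moment_le {X : Type*} [MeasurableSpace X]
    (μ : Measure X) [IsProbabilityMeasure μ]
    (p : X → ℝ) (hp_meas : Measurable p) (hp_nonneg : ∀ x, 0 ≤ p x)
    (hp_int : ∫ x, p x ∂μ = 1) (hp_pos : ∀ᵐ x ∂μ, 0 < p x) :
    ∫ x, max (Real.log (1 / p x)) 0 ^ 4
        ∂(μ.withDensity fun x => ENNReal.ofReal (p x)) ≤ 24 := by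
  set f : X → ℝ≥0 := fun x => ⟨p x, hp_nonneg x⟩ with hf
  have hf_meas : Measurable f := by
    apply Measurable.subtype_mk hp_meas
  have hdens : (fun x => ENNReal.ofReal (p x)) = fun x => (f x : ENNReal) := by
    funext x
    simp [hf, ENNReal.ofReal, Real.toNNReal, hp_nonneg x]
    rfl
  rw [hdens, integral_withDensity_eq_integral_smul hf_meas]
  have hbound : ∀ x, f x • (max (Real.log (1 / p x)) 0 ^ 4) ≤ 24 := by
    intro x
    have : (f x : ℝ) = p x := rfl
    simp only [NNReal.smul_def, smul_eq_mul, this]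
    exact key_pointwise (p x) (hp_nonneg x)
  have hnn : ∀ x, 0 ≤ f x • (max (Real.log (1 / p x)) 0 ^ 4) := by
    intro x
    have : (f x : ℝ) = p x := rfl
    simp only [NNReal.smul_def, smul_eq_mul, this]
    have := hp_nonneg x
    positivity
  have hint : Integrable (fun x => f x • (max (Real.log (1 / p x)) 0 ^ 4)) μ := by
    apply Integrable.mono' (integrable_const (24 : ℝ))
    · apply AEStronglyMeasurable.smul
      · exact hf_meas.coe_nnreal_real.aestronglyMeasurable
      · apply Measurable.aestronglyMeasurable
        exact ((hp_meas.const_div 1).log.max measurable_const).pow_const 4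
    · filter_upwards with x
      rw [Real.norm_eq_abs, abs_of_nonneg (hnn x)]
      exact hbound x
  calc ∫ x, f x • (max (Real.log (1 / p x)) 0 ^ 4) ∂μ
      ≤ ∫ _, (24 : ℝ) ∂μ := integral_mono hint (integrable_const 24) hbound
    _ = 24 := by simp
end

section
/- Let (X, 𝒜, μ) be a measure space and let f, g : X → [0, ∞) be measurable with ∫ f dμ = ∫ g dμ = 1 and f > 0 μ-almost everywhere. If there exists ε with 0 ≤ ε ≤ 1/2 such that |g(x)/f(x) − 1| ≤ ε for μ-almost every x, then the Kullback–Leibler divergence satisfies ∫ f · log(f/g) dμ ≤ 2ε². -/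
open MeasureTheory

/-- One-step KL bound from a uniform density-ratio estimate: if `f, g` are probability
densities and `|g/f − 1| ≤ ε ≤ 1/2` a.e., then `∫ f log(f/g) dμ ≤ 2ε²`. -/
theorem kl_le_of_ratio_close {X : Type*} [MeasurableSpace X]
    (μ : Measure X) (f g : X → ℝ)
    (hf_meas : Measurable f) (hg_meas : Measurable g)
    (hf_nonneg : ∀ x, 0 ≤ f x) (hg_nonneg : ∀ x, 0 ≤ g x)
    (hf_int : ∫ x, f x ∂μ = 1) (hg_int : ∫ x, g x ∂μ = 1)
    (hf_pos : ∀ᵐ x ∂μ, 0 < f x)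
    (ε : ℝ) (hε0 : 0 ≤ ε) (hε : ε ≤ 1 / 2)
    (hratio : ∀ᵐ x ∂μ, |g x / f x - 1| ≤ ε) :
    ∫ x, f x * Real.log (f x / g x) ∂μ ≤ 2 * ε ^ 2 := by
  have hf_intg : Integrable f μ := by
    by_contra h
    rw [integral_undef h] at hf_int; norm_num at hf_int
  have hg_intg : Integrable g μ := by
    by_contra h
    rw [integral_undef h] at hg_int; norm_num at hg_int
  -- key pointwise inequality
  have key : ∀ r : ℝ, 1 / 2 ≤ r → -Real.log r ≤ (1 - r) + 2 * (1 - r) ^ 2 := by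
    intro r hr
    have hr0 : 0 < r := by linarith
    have h1 : Real.log r⁻¹ ≤ r⁻¹ - 1 := Real.log_le_sub_one_of_pos (inv_pos.2 hr0)
    rw [Real.log_inv] at h1
    have hinv : r * r⁻¹ = 1 := mul_inv_cancel₀ hr0.ne'
    nlinarith [sq_nonneg (1 - r), mul_pos hr0 hr0, sq_nonneg (r⁻¹ - 1)]
  set q : X → ℝ := fun x => f x * (g x / f x - 1) ^ 2 with hq
  have hmeas_q : Measurable q := by
    apply hf_meas.mul
    exact ((hg_meas.div hf_meas).sub measurable_const).pow measurable_const
  have hq_bound : ∀ᵐ x ∂μ, ‖q x‖ ≤ ε ^ 2 * f x := by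
    filter_upwards [hratio, hf_pos] with x hx hfx
    have h1 : 0 ≤ q x := mul_nonneg (hf_nonneg x) (sq_nonneg _)
    rw [Real.norm_eq_abs, abs_of_nonneg h1]
    have h2 : (g x / f x - 1) ^ 2 ≤ ε ^ 2 := sq_le_sq' (by linarith [abs_le.1 hx]) (by linarith [abs_le.1 hx])
    calc q x = f x * (g x / f x - 1) ^ 2 := rfl
      _ ≤ f x * ε ^ 2 := mul_le_mul_of_nonneg_left h2 (hf_nonneg x)
      _ = ε ^ 2 * f x := by ring
  have hq_intg : Integrable q μ :=
    Integrable.mono' (hf_intg.const_mul (ε ^ 2)) hmeas_q.aestronglyMeasurable hq_bound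
  have hq_int_le : ∫ x, q x ∂μ ≤ ε ^ 2 := by
    calc ∫ x, q x ∂μ ≤ ∫ x, ε ^ 2 * f x ∂μ := by
          apply integral_mono_ae hq_intg (hf_intg.const_mul _)
          filter_upwards [hq_bound] with x hx
          exact (le_abs_self _).trans hx
      _ = ε ^ 2 := by rw [integral_const_mul, hf_int, mul_one]
  -- main pointwise bound
  have hmain : ∀ᵐ x ∂μ, f x * Real.log (f x / g x) ≤ (f x - g x) + 2 * q x := by
    filter_upwards [hratio, hf_pos] with x hx hfx
    set r := g x / f x with hr
    have hr_half : 1 / 2 ≤ r := by linarith [(abs_le.1 hx).1]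
    have hr0 : 0 < r := by linarith
    have hg0 : 0 < g x := by
      have hfr : f x * r = g x := by rw [hr]; field_simp [hfx.ne']
      nlinarith
    have hlog : Real.log (f x / g x) = -Real.log r := by
      rw [← Real.log_inv]; congr 1; rw [hr, inv_div]
    have hk := mul_le_mul_of_nonneg_left (key r hr_half) (hf_nonneg x)
    have hfr : f x * r = g x := by rw [hr]; field_simp [hfx.ne']
    rw [hlog]
    have hqx : q x = f x * (r - 1) ^ 2 := rfl
    nlinarith [hk, hfr]
  -- integrability of the left-hand side
  have hL_meas : Measurable (fun x => f x * Real.log (f x / g x)) :=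
    hf_meas.mul ((hf_meas.div hg_meas).log)
  have hL_bound : ∀ᵐ x ∂μ, ‖f x * Real.log (f x / g x)‖ ≤ f x := by
    filter_upwards [hratio, hf_pos] with x hx hfx
    set r := g x / f x with hr
    have hr_half : 1 / 2 ≤ r := by linarith [(abs_le.1 hx).1]
    have hr0 : 0 < r := by linarith
    have hlog : Real.log (f x / g x) = -Real.log r := by
      rw [← Real.log_inv]; congr 1; rw [hr, inv_div]
    have h1 : Real.log r ≤ r - 1 := Real.log_le_sub_one_of_pos hr0
    have h2 : Real.log r⁻¹ ≤ r⁻¹ - 1 := Real.log_le_sub_one_of_pos (inv_pos.2 hr0)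
    rw [Real.log_inv] at h2
    have hinv : r⁻¹ ≤ 2 := by
      rw [inv_le_comm₀ (by linarith) (by norm_num)]; linarith
    have habs : |Real.log r| ≤ 1 := by
      rw [abs_le]
      constructor
      · nlinarith
      · have : r ≤ 3 / 2 := by linarith [(abs_le.1 hx).2]
        linarith
    rw [Real.norm_eq_abs, hlog, abs_mul, abs_neg, abs_of_nonneg (hf_nonneg x)]
    calc f x * |Real.log r| ≤ f x * 1 := mul_le_mul_of_nonneg_left habs (hf_nonneg x)
      _ = f x := mul_one _
  have hL_intg : Integrable (fun x => f x * Real.log (f x / g x)) μ :=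
    Integrable.mono' hf_intg hL_meas.aestronglyMeasurable hL_bound
  have hR_intg : Integrable (fun x => (f x - g x) + 2 * q x) μ :=
    (hf_intg.sub hg_intg).add (hq_intg.const_mul 2)
  calc ∫ x, f x * Real.log (f x / g x) ∂μ
      ≤ ∫ x, ((f x - g x) + 2 * q x) ∂μ := integral_mono_ae hL_intg hR_intg hmain
    _ = (∫ x, f x ∂μ - ∫ x, g x ∂μ) + 2 * ∫ x, q x ∂μ := by
        have h1 : Integrable (fun x => f x - g x) μ := hf_intg.sub hg_intg
        have h2 : Integrable (fun x => 2 * q x) μ := hq_intg.const_mul 2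
        rw [integral_add h1 h2, integral_sub hf_intg hg_intg, integral_const_mul]
    _ = 2 * ∫ x, q x ∂μ := by rw [hf_int, hg_int]; ring
    _ ≤ 2 * ε ^ 2 := by linarith
end

section
/- Let E be a real Banach space with identity operator id on E. Let J : [0,1] → L(E) be continuous and let R : [0,1] → L(E) be continuous with ‖R(τ)‖ ≤ a for all τ ∈ [0,1], where 0 ≤ a ≤ 1. Suppose J(s) = s·id − ∫₀ˢ (s−τ) R(τ) ∘ J(τ) dτ for all s ∈ [0,1]. Then (i) ‖J(s)‖ ≤ 2s for all s ∈ [0,1], and (ii) ‖J(1) − id‖ ≤ a. -/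
open intervalIntegral

/-- Quantitative Jacobi-field estimate: if `J(s) = s·id − ∫₀ˢ (s−τ) R(τ) ∘ J(τ) dτ`
with `‖R‖ ≤ a ≤ 1`, then `‖J(s)‖ ≤ 2s` on `[0,1]` and `‖J(1) − id‖ ≤ a`. -/
theorem jacobi_volterra_bound {E : Type*} [NormedAddCommGroup E] [NormedSpace ℝ E]
    [CompleteSpace E]
    (J R : ℝ → E →L[ℝ] E)
    (hJ : ContinuousOn J (Set.Icc (0 : ℝ) 1))
    (hR : ContinuousOn R (Set.Icc (0 : ℝ) 1))
    (a : ℝ) (ha0 : 0 ≤ a) (ha1 : a ≤ 1)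
    (hRa : ∀ τ ∈ Set.Icc (0 : ℝ) 1, ‖R τ‖ ≤ a)
    (hvolt : ∀ s ∈ Set.Icc (0 : ℝ) 1,
      J s = s • (ContinuousLinearMap.id ℝ E) -
        ∫ τ in (0 : ℝ)..s, (s - τ) • (R τ ∘L J τ)) :
    (∀ s ∈ Set.Icc (0 : ℝ) 1, ‖J s‖ ≤ 2 * s) ∧
      ‖J 1 - ContinuousLinearMap.id ℝ E‖ ≤ a := by
  -- uniform bound on ‖J‖
  obtain ⟨M, hM⟩ := isCompact_Icc.exists_bound_of_continuousOn hJ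
  have hM0 : (0:ℝ) ≤ M := le_trans (norm_nonneg _) (hM 0 ⟨le_refl 0, zero_le_one⟩)
  -- norm of s • id
  have hid : ∀ s : ℝ, 0 ≤ s → ‖s • (ContinuousLinearMap.id ℝ E)‖ ≤ s := by
    intro s hs0
    calc ‖s • (ContinuousLinearMap.id ℝ E)‖ ≤ ‖s‖ * ‖ContinuousLinearMap.id ℝ E‖ :=
          ContinuousLinearMap.opNorm_smul_le _ _
      _ ≤ s * 1 := by
          rw [Real.norm_eq_abs, abs_of_nonneg hs0]
          exact mul_le_mul_of_nonneg_left ContinuousLinearMap.norm_id_le hs0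
      _ = s := mul_one s
  -- base linear bound
  have base : ∀ s ∈ Set.Icc (0:ℝ) 1, ‖J s‖ ≤ (1 + M) * s := by
    intro s hs
    obtain ⟨hs0, hs1⟩ := hs
    have hIb : ‖∫ τ in (0:ℝ)..s, (s - τ) • (R τ ∘L J τ)‖ ≤ (a * M) * |s - 0| := by
      apply intervalIntegral.norm_integral_le_of_norm_le_const
      intro τ hτ
      rw [Set.uIoc_of_le hs0] at hτ
      obtain ⟨hτ0, hτs⟩ := hτ
      have hτmem : τ ∈ Set.Icc (0:ℝ) 1 := ⟨le_of_lt hτ0, le_trans hτs hs1⟩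
      have hcomp : ‖R τ ∘L J τ‖ ≤ a * M :=
        le_trans (ContinuousLinearMap.opNorm_comp_le _ _)
          (mul_le_mul (hRa τ hτmem) (hM τ hτmem) (norm_nonneg _) ha0)
      refine le_trans (ContinuousLinearMap.opNorm_smul_le _ _) ?_
      rw [Real.norm_eq_abs, abs_of_nonneg (by linarith : (0:ℝ) ≤ s - τ)]
      calc (s - τ) * ‖R τ ∘L J τ‖ ≤ 1 * (a * M) :=
            mul_le_mul (by linarith) hcomp (norm_nonneg _) zero_le_one
        _ = a * M := one_mul _
    rw [sub_zero, abs_of_nonneg hs0] at hIb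
    have hJs := hvolt s ⟨hs0, hs1⟩
    calc ‖J s‖ = ‖s • (ContinuousLinearMap.id ℝ E) -
          ∫ τ in (0:ℝ)..s, (s - τ) • (R τ ∘L J τ)‖ := by rw [hJs]
      _ ≤ s + a * M * s := le_trans (norm_sub_le _ _) (add_le_add (hid s hs0) hIb)
      _ ≤ (1 + M) * s := by nlinarith [mul_nonneg hM0 hs0]
  -- contraction step
  have est : ∀ C : ℝ, 0 ≤ C → (∀ τ ∈ Set.Icc (0:ℝ) 1, ‖J τ‖ ≤ C * τ) →
      ∀ s ∈ Set.Icc (0:ℝ) 1, ‖J s‖ ≤ (1 + C / 2) * s := by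
    intro C hC hQ s hs
    obtain ⟨hs0, hs1⟩ := hs
    have hg : IntervalIntegrable (fun τ => s * a * C * τ) MeasureTheory.volume 0 s :=
      (Continuous.intervalIntegrable (by continuity) _ _)
    have hval : (∫ τ in (0:ℝ)..s, s * a * C * τ) = s * a * C * (s ^ 2 / 2) := by
      rw [intervalIntegral.integral_const_mul, integral_id]; ring
    have hIb : ‖∫ τ in (0:ℝ)..s, (s - τ) • (R τ ∘L J τ)‖ ≤ s * a * C * (s ^ 2 / 2) := by
      refine le_trans (intervalIntegral.norm_integral_le_abs_of_norm_le ?_ hg) ?_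
      · refine MeasureTheory.ae_restrict_of_forall_mem measurableSet_uIoc ?_
        intro τ hτ
        rw [Set.uIoc_of_le hs0] at hτ
        obtain ⟨hτ0, hτs⟩ := hτ
        have hτmem : τ ∈ Set.Icc (0:ℝ) 1 := ⟨le_of_lt hτ0, le_trans hτs hs1⟩
        have hcomp : ‖R τ ∘L J τ‖ ≤ a * (C * τ) :=
          le_trans (ContinuousLinearMap.opNorm_comp_le _ _)
            (mul_le_mul (hRa τ hτmem) (hQ τ hτmem) (norm_nonneg _) ha0)
        refine le_trans (ContinuousLinearMap.opNorm_smul_le _ _) ?_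
        rw [Real.norm_eq_abs, abs_of_nonneg (by linarith : (0:ℝ) ≤ s - τ)]
        calc (s - τ) * ‖R τ ∘L J τ‖ ≤ s * (a * (C * τ)) :=
              mul_le_mul (by linarith) hcomp (norm_nonneg _) hs0
          _ = s * a * C * τ := by ring
      · rw [hval, abs_of_nonneg (by positivity)]
    have hJs := hvolt s ⟨hs0, hs1⟩
    calc ‖J s‖ = ‖s • (ContinuousLinearMap.id ℝ E) -
          ∫ τ in (0:ℝ)..s, (s - τ) • (R τ ∘L J τ)‖ := by rw [hJs]
      _ ≤ s + s * a * C * (s ^ 2 / 2) :=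
          le_trans (norm_sub_le _ _) (add_le_add (hid s hs0) hIb)
      _ ≤ (1 + C / 2) * s := by
          nlinarith [mul_nonneg hC hs0, mul_nonneg (mul_nonneg hC hs0) hs0,
            mul_nonneg ha0 (mul_nonneg hC hs0), sq_nonneg s,
            mul_nonneg (mul_nonneg ha0 hC) (mul_nonneg hs0 hs0)]
  -- nonnegativity of the iterates
  have hcn : ∀ n : ℕ, (0:ℝ) ≤ 2 + (M - 1) / 2 ^ n := by
    intro n
    have h1 : (1:ℝ) ≤ 2 ^ n := one_le_pow₀ (by norm_num)
    rcases le_or_gt 1 M with h | h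
    · have : 0 ≤ (M - 1) / 2 ^ n := div_nonneg (by linarith) (by positivity)
      linarith
    · have h2 : (-1 : ℝ) * 2 ^ n ≤ M - 1 := by nlinarith
      have : (-1 : ℝ) ≤ (M - 1) / 2 ^ n := (le_div_iff₀ (by positivity)).mpr h2
      linarith
  -- iterate the contraction
  have hQ : ∀ n : ℕ, ∀ s ∈ Set.Icc (0:ℝ) 1, ‖J s‖ ≤ (2 + (M - 1) / 2 ^ n) * s := by
    intro n
    induction n with
    | zero =>
        intro s hs
        have h := base s hs
        have : (2 + (M - 1) / 2 ^ (0:ℕ)) = 1 + M := by rw [pow_zero, div_one]; ring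
        rw [this]; linarith
    | succ n ih =>
        intro s hs
        have h := est _ (hcn n) ih s hs
        refine h.trans (le_of_eq ?_)
        have h2n : (2:ℝ) ^ n ≠ 0 := by positivity
        field_simp
        ring
  -- pass to the limit
  have part1 : ∀ s ∈ Set.Icc (0:ℝ) 1, ‖J s‖ ≤ 2 * s := by
    intro s hs
    have hlim : Filter.Tendsto (fun n : ℕ => (2 + (M - 1) / 2 ^ n) * s)
        Filter.atTop (nhds (2 * s)) := by
      have h0 : Filter.Tendsto (fun n : ℕ => (M - 1) * (1 / 2 : ℝ) ^ n)
          Filter.atTop (nhds 0) := by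
        simpa using (tendsto_pow_atTop_nhds_zero_of_lt_one (by norm_num)
          (by norm_num : (1/2:ℝ) < 1)).const_mul (M - 1)
      have heq : (fun n : ℕ => (2 + (M - 1) / 2 ^ n) * s)
          = fun n : ℕ => (2 + (M - 1) * (1 / 2 : ℝ) ^ n) * s := by
        funext n
        rw [div_pow, one_pow]
        ring
      rw [heq]
      have := ((h0.const_add 2).mul_const s)
      simpa using this
    exact ge_of_tendsto' hlim fun n => hQ n s hs
  refine ⟨part1, ?_⟩
  -- part (ii)
  have hv1 := hvolt 1 ⟨zero_le_one, le_refl 1⟩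
  have hdiff : J 1 - ContinuousLinearMap.id ℝ E
      = -(∫ τ in (0:ℝ)..1, (1 - τ) • (R τ ∘L J τ)) := by
    rw [hv1, one_smul]; abel
  rw [hdiff, norm_neg]
  have hIb : ‖∫ τ in (0:ℝ)..1, (1 - τ) • (R τ ∘L J τ)‖ ≤ (a / 2) * |(1:ℝ) - 0| := by
    apply intervalIntegral.norm_integral_le_of_norm_le_const
    intro τ hτ
    rw [Set.uIoc_of_le zero_le_one] at hτ
    obtain ⟨hτ0, hτ1⟩ := hτ
    have hτmem : τ ∈ Set.Icc (0:ℝ) 1 := ⟨le_of_lt hτ0, hτ1⟩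
    have hcomp : ‖R τ ∘L J τ‖ ≤ a * (2 * τ) :=
      le_trans (ContinuousLinearMap.opNorm_comp_le _ _)
        (mul_le_mul (hRa τ hτmem) (part1 τ hτmem) (norm_nonneg _) ha0)
    refine le_trans (ContinuousLinearMap.opNorm_smul_le _ _) ?_
    rw [Real.norm_eq_abs, abs_of_nonneg (by linarith : (0:ℝ) ≤ 1 - τ)]
    calc (1 - τ) * ‖R τ ∘L J τ‖ ≤ (1 - τ) * (a * (2 * τ)) :=
          mul_le_mul_of_nonneg_left hcomp (by linarith)
      _ ≤ a / 2 := by nlinarith [mul_nonneg ha0 (sq_nonneg (1 - 2 * τ))]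
  rw [sub_zero, abs_one, mul_one] at hIb
  linarith
end
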